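/- Let C be a clutter with the König property, without isolated vertices, and without cycles of length 3 or 4, and let g be the covering number of C. Then the following conditions are equivalent: (a) C is unmixed; (b) there is a perfect matching e_1,…,e_g of C (pairwise disjoint edges whose union is the vertex set X) such that each e_i has a free vertex and, for any two edges f_1, f_2 of C and any e_i, one has f_1 ∩ e_i ⊆ f_2 ∩ e_i or f_2 ∩ e_i ⊆ f_1 ∩ e_i; (c) the independence complex Δ_C is pure shellable. -/

import Mathlib

variable {V : Type} [Fintype V] [DecidableEq V]

/-- A clutter: a family of finsets (edges), none of which contains another. -/
def IsClutter (E : Set (Finset V)) : Prop :=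
  ∀ e ∈ E, ∀ f ∈ E, e ⊆ f → e = f

/-- A vertex cover: a set of vertices meeting every edge. -/
def IsVertexCover (E : Set (Finset V)) (C : Finset V) : Prop :=
  ∀ e ∈ E, (e ∩ C).Nonempty

/-- A minimal vertex cover. -/
def IsMinimalVertexCover (E : Set (Finset V)) (C : Finset V) : Prop :=
  IsVertexCover E C ∧ ∀ D ⊂ C, ¬ IsVertexCover E D

/-- The covering number: minimum cardinality of a vertex cover. -/
noncomputable def coveringNumber (E : Set (Finset V)) : ℕ :=
  sInf {n : ℕ | ∃ C : Finset V, IsVertexCover E C ∧ C.card = n}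

/-- Unmixed: all minimal vertex covers have the same cardinality. -/
def Unmixed (E : Set (Finset V)) : Prop :=
  ∀ C D : Finset V, IsMinimalVertexCover E C → IsMinimalVertexCover E D →
    C.card = D.card

/-- A matching: a set of pairwise disjoint edges. -/
def IsMatching (E : Set (Finset V)) (M : Finset (Finset V)) : Prop :=
  ↑M ⊆ E ∧ (M : Set (Finset V)).Pairwise Disjoint

/-- The König property: the maximum size of a matching equals the covering number. -/
def HasKonigProperty (E : Set (Finset V)) : Prop :=
  (∃ M : Finset (Finset V), IsMatching E M ∧ M.card = coveringNumber E) ∧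
  ∀ M : Finset (Finset V), IsMatching E M → M.card ≤ coveringNumber E

/-- A perfect matching of König type: pairwise disjoint edges `em 0, …, em (g-1)`
whose union is the whole vertex set, where `g` is the covering number. -/
def IsPerfectMatchingKT (E : Set (Finset V)) {g : ℕ} (em : Fin g → Finset V) : Prop :=
  (∀ i, em i ∈ E) ∧ (∀ i j, i ≠ j → Disjoint (em i) (em j)) ∧
  (∀ x : V, ∃ i, x ∈ em i) ∧ g = coveringNumber E

/-- An independent set: contains no edge. -/
def IsIndependentSet (E : Set (Finset V)) (F : Finset V) : Prop :=
  ∀ e ∈ E, ¬ e ⊆ F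

/-- A facet of the independence complex: a maximal independent set. -/
def IsFacet (E : Set (Finset V)) (F : Finset V) : Prop :=
  IsIndependentSet E F ∧ ∀ G : Finset V, IsIndependentSet E G → F ⊆ G → F = G

/-- The set of facets of the independence complex of a clutter. -/
def cFacets (E : Set (Finset V)) : Set (Finset V) := {F | IsFacet E F}

/-- `F : Fin s → Finset V` is a shelling order of the family of facets `Fac`. -/
def IsShelling {s : ℕ} (Fac : Set (Finset V)) (F : Fin s → Finset V) : Prop :=
  Function.Injective F ∧ (∀ G : Finset V, G ∈ Fac ↔ ∃ i, F i = G) ∧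
  ∀ i j : Fin s, i < j →
    ∃ v ∈ F j \ F i, ∃ l : Fin s, l < j ∧ F j \ F l = {v}

/-- A family of facets is shellable if it admits a shelling order. -/
def Shellable (Fac : Set (Finset V)) : Prop :=
  ∃ (s : ℕ) (F : Fin s → Finset V), IsShelling Fac F

/-- A family of facets is pure if all its members have the same cardinality. -/
def PureFamily (Fac : Set (Finset V)) : Prop :=
  ∀ F ∈ Fac, ∀ G ∈ Fac, F.card = G.card

/-- Pure shellable: pure and shellable. -/
def PureShellable (Fac : Set (Finset V)) : Prop :=
  PureFamily Fac ∧ Shellable Fac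

/-- A free vertex: a vertex belonging to exactly one edge. -/
def HasFreeVertex (E : Set (Finset V)) : Prop :=
  ∃ x : V, ∃ e ∈ E, x ∈ e ∧ ∀ f ∈ E, x ∈ f → f = e

/-- A cycle of length `r`: `r` distinct vertices and `r` distinct edges such that each
of the vertices lies in exactly two of the edges and each of the edges contains exactly
two of the vertices. -/
def HasCycleOfLength (E : Set (Finset V)) (r : ℕ) : Prop :=
  ∃ (v : Fin r → V) (f : Fin r → Finset V),
    Function.Injective v ∧ Function.Injective f ∧ (∀ j, f j ∈ E) ∧
    (∀ i : Fin r, (Finset.univ.filter (fun j => v i ∈ f j)).card = 2) ∧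
    (∀ j : Fin r, (Finset.univ.filter (fun i => v i ∈ f j)).card = 2)

set_option linter.unusedSectionVars false
set_option linter.unusedVariables false

section AuxLemmas
variable {E : Set (Finset V)} {F G C D : Finset V}

open Finset








variable {E : Set (Finset V)} {F G C D : Finset V}

lemma indep_iff_compl_cover : IsIndependentSet E F ↔ IsVertexCover E Fᶜ := by
  unfold IsIndependentSet IsVertexCover
  refine forall₂_congr fun e he => ?_
  rw [not_iff_comm, Finset.not_nonempty_iff_eq_empty]
  constructor
  · intro h x hx
    by_contra hxF
    exact absurd (Finset.mem_inter.2 ⟨hx, Finset.mem_compl.2 hxF⟩) (by simp [h])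
  · intro h
    ext x
    simp only [Finset.mem_inter, Finset.mem_compl, Finset.notMem_empty, iff_false]
    rintro ⟨hx, hxc⟩
    exact hxc (h hx)

lemma facet_iff_compl_mincover : IsFacet E F ↔ IsMinimalVertexCover E Fᶜ := by
  constructor
  · rintro ⟨hind, hmax⟩
    refine ⟨indep_iff_compl_cover.1 hind, fun D hD hDcov => ?_⟩
    have hind' : IsIndependentSet E Dᶜ := by
      rw [indep_iff_compl_cover, compl_compl]; exact hDcov
    have hFD : F ⊆ Dᶜ := by
      intro x hx
      simp only [Finset.mem_compl]
      intro hxD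
      exact absurd (hD.1 hxD) (by simp [hx])
    have := hmax Dᶜ hind' hFD
    rw [this, compl_compl] at hD
    exact (lt_irrefl _ hD).elim
  · rintro ⟨hcov, hmin⟩
    have hind : IsIndependentSet E F := by
      rw [indep_iff_compl_cover]; exact hcov
    refine ⟨hind, fun G hG hFG => ?_⟩
    by_contra hne
    have : Gᶜ ⊂ Fᶜ := by
      have hlt : F ⊂ G := lt_of_le_of_ne hFG hne
      constructor
      · exact Finset.compl_subset_compl.2 hlt.subset
      · intro hsub
        exact hlt.not_subset (by simpa using Finset.compl_subset_compl.2 hsub)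
    exact hmin Gᶜ this (indep_iff_compl_cover.1 hG)

lemma mincover_compl_facet (h : IsMinimalVertexCover E C) : IsFacet E Cᶜ := by
  rw [facet_iff_compl_mincover, compl_compl]; exact h

lemma exists_mincover_subset (h : IsVertexCover E C) :
    ∃ D ⊆ C, IsMinimalVertexCover E D := by
  classical
  induction C using Finset.strongInduction with
  | _ C ih =>
    by_cases hm : ∀ D ⊂ C, ¬ IsVertexCover E D
    · exact ⟨C, le_refl _, h, hm⟩
    · push_neg at hm
      obtain ⟨D, hD, hDc⟩ := hm
      obtain ⟨D', hD', hmin⟩ := ih D hD hDc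
      exact ⟨D', hD'.trans hD.subset, hmin⟩

lemma exists_facet_superset (h : IsIndependentSet E G) :
    ∃ F, G ⊆ F ∧ IsFacet E F := by
  obtain ⟨D, hD, hmin⟩ := exists_mincover_subset (indep_iff_compl_cover.1 h)
  refine ⟨Dᶜ, ?_, mincover_compl_facet hmin⟩
  intro x hx
  simp only [Finset.mem_compl]
  intro hxD
  exact absurd (hD hxD) (by simp [hx])

lemma coveringNumber_le (h : IsVertexCover E C) : coveringNumber E ≤ C.card :=
  Nat.sInf_le ⟨C, h, rfl⟩



lemma empty_not_mem (hclut : IsClutter E) (hkonig : HasKonigProperty E) : ∅ ∉ E := by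
  intro hmem
  -- then no cover exists, so coveringNumber = 0, but {∅} is a matching of card 1
  have hnocover : ∀ C : Finset V, ¬ IsVertexCover E C := by
    intro C hC
    have := hC ∅ hmem
    simp at this
  have hg : coveringNumber E = 0 := by
    have : {n : ℕ | ∃ C : Finset V, IsVertexCover E C ∧ C.card = n} = ∅ := by
      ext n; simp only [Set.mem_setOf_eq, Set.mem_empty_iff_false, iff_false]
      rintro ⟨C, hC, -⟩; exact hnocover C hC
    rw [coveringNumber, this, Nat.sInf_empty]
  have hM : IsMatching E {∅} := by
    constructor
    · intro f hf; simp at hf; rwa [hf]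
    · intro a ha b hb hab; simp at ha hb; rw [ha, hb] at hab; exact absurd rfl hab
  have := hkonig.2 {∅} hM
  rw [hg] at this
  simp at this

lemma exists_cover_card_eq (h : ∅ ∉ E) :
    ∃ C : Finset V, IsVertexCover E C ∧ C.card = coveringNumber E := by
  have hne : (Finset.univ : Finset V) ∈ {C : Finset V | IsVertexCover E C} := by
    intro e he
    rcases Finset.eq_empty_or_nonempty e with rfl | ⟨x, hx⟩
    · exact absurd he h
    · exact ⟨x, Finset.mem_inter.2 ⟨hx, Finset.mem_univ x⟩⟩
  have : (coveringNumber E) ∈ {n : ℕ | ∃ C : Finset V, IsVertexCover E C ∧ C.card = n} :=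
    Nat.sInf_mem ⟨(Finset.univ : Finset V).card, Finset.univ, hne, rfl⟩
  exact this

lemma unmixed_mincover_card (hU : Unmixed E) (h : ∅ ∉ E)
    (hC : IsMinimalVertexCover E C) : C.card = coveringNumber E := by
  obtain ⟨C₀, hC₀, hcard⟩ := exists_cover_card_eq h
  obtain ⟨D, hDsub, hDmin⟩ := exists_mincover_subset hC₀
  have h1 : D.card ≤ coveringNumber E := hcard ▸ Finset.card_le_card hDsub
  have h2 : coveringNumber E ≤ D.card := coveringNumber_le hDmin.1
  have := hU C D hC hDmin
  omega

/-- Extract a `Fin g`-indexed matching from the König property. -/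
lemma exists_matching_fun (hkonig : HasKonigProperty E) (h : ∅ ∉ E) :
    ∃ em : Fin (coveringNumber E) → Finset V,
      (∀ i, em i ∈ E) ∧ (∀ i j, i ≠ j → Disjoint (em i) (em j)) := by
  obtain ⟨M, hM, hcard⟩ := hkonig.1
  have e : Fin (coveringNumber E) ≃ {x // x ∈ M} := by
    rw [← hcard]; exact M.equivFin.symm
  refine ⟨fun i => (e i : Finset V), fun i => (e i).2 |> fun h' => hM.1 h', ?_⟩
  intro i j hij
  have hne : (e i : Finset V) ≠ (e j : Finset V) := by
    intro hEq
    exact hij (e.injective (Subtype.ext hEq))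
  exact hM.2 (e i).2 (e j).2 hne

/-- Counting: a cover of cardinality `g` meets each of `g` disjoint edges exactly once,
and is contained in their union. -/
lemma cover_inter_card_one {g : ℕ} (em : Fin g → Finset V)
    (hE : ∀ i, em i ∈ E) (hd : ∀ i j, i ≠ j → Disjoint (em i) (em j))
    (hC : IsVertexCover E C) (hcard : C.card = g) :
    (∀ i, (C ∩ em i).card = 1) ∧ (∀ x ∈ C, ∃ i, x ∈ em i) := by
  classical
  set T := Finset.univ.biUnion (fun i : Fin g => C ∩ em i) with hT
  have hTsub : T ⊆ C := by
    intro x hx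
    simp only [hT, Finset.mem_biUnion] at hx
    obtain ⟨i, -, hi⟩ := hx
    exact (Finset.mem_inter.1 hi).1
  have hdisj : ∀ i ∈ (Finset.univ : Finset (Fin g)), ∀ j ∈ Finset.univ, i ≠ j →
      Disjoint (C ∩ em i) (C ∩ em j) := by
    intro i _ j _ hij
    exact Finset.disjoint_of_subset_left Finset.inter_subset_right
      (Finset.disjoint_of_subset_right Finset.inter_subset_right (hd i j hij))
  have hTcard : T.card = ∑ i : Fin g, (C ∩ em i).card := Finset.card_biUnion hdisj
  have hone : ∀ i : Fin g, 1 ≤ (C ∩ em i).card := by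
    intro i
    have := hC (em i) (hE i)
    rw [Finset.inter_comm] at this
    exact Finset.card_pos.2 this
  have hsum_le : ∑ i : Fin g, (C ∩ em i).card ≤ g := by
    calc ∑ i : Fin g, (C ∩ em i).card = T.card := hTcard.symm
      _ ≤ C.card := Finset.card_le_card hTsub
      _ = g := hcard
  have hsum_ge : g ≤ ∑ i : Fin g, (C ∩ em i).card := by
    calc g = ∑ _i : Fin g, 1 := by simp
      _ ≤ _ := Finset.sum_le_sum (fun i _ => hone i)
  have hsum : ∑ i : Fin g, (C ∩ em i).card = g := le_antisymm hsum_le hsum_ge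
  have hall : ∀ i ∈ (Finset.univ : Finset (Fin g)), (C ∩ em i).card = 1 := by
    have heq : ∑ i ∈ (Finset.univ : Finset (Fin g)), (1 : ℕ) =
        ∑ i ∈ Finset.univ, (C ∩ em i).card := by rw [hsum]; simp
    have := (Finset.sum_eq_sum_iff_of_le (fun i _ => hone i)).1 heq
    intro i hi; exact (this i hi).symm
  have hTC : T = C := by
    apply Finset.eq_of_subset_of_card_le hTsub
    rw [hTcard, hsum, hcard]
  constructor
  · intro i; exact hall i (Finset.mem_univ i)
  · intro x hx
    rw [← hTC] at hx
    simp only [hT, Finset.mem_biUnion] at hx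
    obtain ⟨i, -, hi⟩ := hx
    exact ⟨i, (Finset.mem_inter.1 hi).2⟩

/-- Under unmixedness, any minimal cover has card g, hence meets each matching edge once. -/
lemma unmixed_facet_diff_singleton (hclut : IsClutter E) (hU : Unmixed E) (hvoid : ∅ ∉ E)
    {g : ℕ} (hg : g = coveringNumber E) (em : Fin g → Finset V)
    (hE : ∀ i, em i ∈ E) (hd : ∀ i j, i ≠ j → Disjoint (em i) (em j)) :
    ∀ F : Finset V, IsFacet E F → ∀ i, ∃ c ∈ em i, em i \ F = {c} := by
  intro F hF i
  have hmin := facet_iff_compl_mincover.1 hF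
  have hcard : Fᶜ.card = g := by rw [unmixed_mincover_card hU hvoid hmin, hg]
  obtain ⟨hone, -⟩ := cover_inter_card_one em hE hd hmin.1 hcard
  obtain ⟨c, hc⟩ := Finset.card_eq_one.1 (hone i)
  have hdiff : em i \ F = Fᶜ ∩ em i := by
    ext x; simp only [Finset.mem_sdiff, Finset.mem_inter, Finset.mem_compl]; tauto
  refine ⟨c, ?_, by rw [hdiff, hc]⟩
  have : c ∈ Fᶜ ∩ em i := by rw [hc]; simp
  exact (Finset.mem_inter.1 this).2

/-- Under unmixedness, the matching is perfect. -/
lemma unmixed_perfect (hclut : IsClutter E) (hU : Unmixed E) (hvoid : ∅ ∉ E)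
    (hnoiso : ∀ x : V, ∃ e ∈ E, x ∈ e)
    {g : ℕ} (hg : g = coveringNumber E) (em : Fin g → Finset V)
    (hE : ∀ i, em i ∈ E) (hd : ∀ i j, i ≠ j → Disjoint (em i) (em j)) :
    ∀ x : V, ∃ i, x ∈ em i := by
  intro x
  obtain ⟨e, he, hxe⟩ := hnoiso x
  have hind : IsIndependentSet E (e \ {x}) := by
    intro f hf hsub
    have hfe : f ⊆ e := hsub.trans (Finset.sdiff_subset)
    have := hclut f hf e he hfe
    subst this
    exact absurd (hsub hxe) (by simp)
  obtain ⟨F, hsubF, hF⟩ := exists_facet_superset hind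
  have hxF : x ∉ F := by
    intro hxF
    refine hF.1 e he ?_
    intro y hy
    by_cases hxy : y = x
    · rwa [hxy]
    · exact hsubF (Finset.mem_sdiff.2 ⟨hy, by simp [hxy]⟩)
  have hmin := facet_iff_compl_mincover.1 hF
  have hcard : Fᶜ.card = g := by rw [unmixed_mincover_card hU hvoid hmin, hg]
  obtain ⟨-, hsub⟩ := cover_inter_card_one em hE hd hmin.1 hcard
  exact hsub x (Finset.mem_compl.2 hxF)


lemma mk_cycle3 {A B C : Finset V} {x y z : V}
    (hA : A ∈ E) (hB : B ∈ E) (hC : C ∈ E)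
    (hx1 : x ∈ A) (hx2 : x ∈ B) (hx3 : x ∉ C)
    (hy1 : y ∈ B) (hy2 : y ∈ C) (hy3 : y ∉ A)
    (hz1 : z ∈ C) (hz2 : z ∈ A) (hz3 : z ∉ B) : HasCycleOfLength E 3 := by
  classical
  have hxy : x ≠ y := fun h => hy3 (h ▸ hx1)
  have hxz : x ≠ z := fun h => hx3 (h ▸ hz1)
  have hyz : y ≠ z := fun h => hz3 (h ▸ hy1)
  have hAB : A ≠ B := fun h => hy3 (h ▸ hy1)
  have hAC : A ≠ C := fun h => hx3 (h ▸ hx1)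
  have hBC : B ≠ C := fun h => hx3 (h ▸ hx2)
  refine ⟨![x, y, z], ![A, B, C], ?_, ?_, ?_, ?_, ?_⟩
  · intro i j hij
    fin_cases i <;> fin_cases j <;> simp_all
  · intro i j hij
    fin_cases i <;> fin_cases j <;> simp_all
  · intro j; fin_cases j <;> simpa
  · intro i
    fin_cases i
    · have : (Finset.univ.filter (fun j => ![x,y,z] 0 ∈ ![A,B,C] j)) = {0, 1} := by
        ext j; fin_cases j <;> simp only [Finset.mem_filter, Finset.mem_univ, true_and] <;> simp [hx1, hx2, hx3]
      exact (congrArg Finset.card this).trans (by decide)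
    · have : (Finset.univ.filter (fun j => ![x,y,z] 1 ∈ ![A,B,C] j)) = {1, 2} := by
        ext j; fin_cases j <;> simp only [Finset.mem_filter, Finset.mem_univ, true_and] <;> simp [hy1, hy2, hy3]
      exact (congrArg Finset.card this).trans (by decide)
    · have : (Finset.univ.filter (fun j => ![x,y,z] 2 ∈ ![A,B,C] j)) = {0, 2} := by
        ext j; fin_cases j <;> simp only [Finset.mem_filter, Finset.mem_univ, true_and] <;> simp [hz1, hz2, hz3]
      exact (congrArg Finset.card this).trans (by decide)
  · intro j
    fin_cases j
    · have : (Finset.univ.filter (fun i => ![x,y,z] i ∈ ![A,B,C] 0)) = {0, 2} := by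
        ext i; fin_cases i <;> simp only [Finset.mem_filter, Finset.mem_univ, true_and] <;> simp [hx1, hy3, hz2]
      exact (congrArg Finset.card this).trans (by decide)
    · have : (Finset.univ.filter (fun i => ![x,y,z] i ∈ ![A,B,C] 1)) = {0, 1} := by
        ext i; fin_cases i <;> simp only [Finset.mem_filter, Finset.mem_univ, true_and] <;> simp [hx2, hy1, hz3]
      exact (congrArg Finset.card this).trans (by decide)
    · have : (Finset.univ.filter (fun i => ![x,y,z] i ∈ ![A,B,C] 2)) = {1, 2} := by
        ext i; fin_cases i <;> simp only [Finset.mem_filter, Finset.mem_univ, true_and] <;> simp [hx3, hy2, hz1]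
      exact (congrArg Finset.card this).trans (by decide)

lemma mk_cycle4 {A B C D : Finset V} {w x y z : V}
    (hA : A ∈ E) (hB : B ∈ E) (hC : C ∈ E) (hD : D ∈ E)
    (hw1 : w ∈ A) (hw2 : w ∈ B) (hw3 : w ∉ C) (hw4 : w ∉ D)
    (hx1 : x ∈ B) (hx2 : x ∈ C) (hx3 : x ∉ D) (hx4 : x ∉ A)
    (hy1 : y ∈ C) (hy2 : y ∈ D) (hy3 : y ∉ A) (hy4 : y ∉ B)
    (hz1 : z ∈ D) (hz2 : z ∈ A) (hz3 : z ∉ B) (hz4 : z ∉ C) :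
    HasCycleOfLength E 4 := by
  classical
  have hwx : w ≠ x := fun h => hx4 (h ▸ hw1)
  have hwy : w ≠ y := fun h => hy3 (h ▸ hw1)
  have hwz : w ≠ z := fun h => hz3 (h ▸ hw2)
  have hxy : x ≠ y := fun h => hy4 (h ▸ hx1)
  have hxz : x ≠ z := fun h => hz4 (h ▸ hx2)
  have hyz : y ≠ z := fun h => hz4 (h ▸ hy1)
  have hAB : A ≠ B := fun h => hx4 (h ▸ hx1)
  have hAC : A ≠ C := fun h => hx4 (h ▸ hx2)
  have hAD : A ≠ D := fun h => hy3 (h ▸ hy2)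
  have hBC : B ≠ C := fun h => hw3 (h ▸ hw2)
  have hBD : B ≠ D := fun h => hz3 (h ▸ hz1)
  have hCD : C ≠ D := fun h => hx3 (h ▸ hx2)
  refine ⟨![w, x, y, z], ![A, B, C, D], ?_, ?_, ?_, ?_, ?_⟩
  · intro i j hij
    fin_cases i <;> fin_cases j <;> simp_all
  · intro i j hij
    fin_cases i <;> fin_cases j <;> simp_all
  · intro j; fin_cases j <;> simpa
  · intro i
    fin_cases i
    · have : (Finset.univ.filter (fun j => ![w,x,y,z] 0 ∈ ![A,B,C,D] j)) = {0, 1} := by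
        ext j; fin_cases j <;> simp only [Finset.mem_filter, Finset.mem_univ, true_and] <;> simp [hw1, hw2, hw3, hw4]
      exact (congrArg Finset.card this).trans (by decide)
    · have : (Finset.univ.filter (fun j => ![w,x,y,z] 1 ∈ ![A,B,C,D] j)) = {1, 2} := by
        ext j; fin_cases j <;> simp only [Finset.mem_filter, Finset.mem_univ, true_and] <;> simp [hx1, hx2, hx3, hx4]
      exact (congrArg Finset.card this).trans (by decide)
    · have : (Finset.univ.filter (fun j => ![w,x,y,z] 2 ∈ ![A,B,C,D] j)) = {2, 3} := by
        ext j; fin_cases j <;> simp only [Finset.mem_filter, Finset.mem_univ, true_and] <;> simp [hy1, hy2, hy3, hy4]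
      exact (congrArg Finset.card this).trans (by decide)
    · have : (Finset.univ.filter (fun j => ![w,x,y,z] 3 ∈ ![A,B,C,D] j)) = {0, 3} := by
        ext j; fin_cases j <;> simp only [Finset.mem_filter, Finset.mem_univ, true_and] <;> simp [hz1, hz2, hz3, hz4]
      exact (congrArg Finset.card this).trans (by decide)
  · intro j
    fin_cases j
    · have : (Finset.univ.filter (fun i => ![w,x,y,z] i ∈ ![A,B,C,D] 0)) = {0, 3} := by
        ext i; fin_cases i <;> simp only [Finset.mem_filter, Finset.mem_univ, true_and] <;> simp [hw1, hx4, hy3, hz2]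
      exact (congrArg Finset.card this).trans (by decide)
    · have : (Finset.univ.filter (fun i => ![w,x,y,z] i ∈ ![A,B,C,D] 1)) = {0, 1} := by
        ext i; fin_cases i <;> simp only [Finset.mem_filter, Finset.mem_univ, true_and] <;> simp [hw2, hx1, hy4, hz3]
      exact (congrArg Finset.card this).trans (by decide)
    · have : (Finset.univ.filter (fun i => ![w,x,y,z] i ∈ ![A,B,C,D] 2)) = {1, 2} := by
        ext i; fin_cases i <;> simp only [Finset.mem_filter, Finset.mem_univ, true_and] <;> simp [hw3, hx2, hy1, hz4]
      exact (congrArg Finset.card this).trans (by decide)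
    · have : (Finset.univ.filter (fun i => ![w,x,y,z] i ∈ ![A,B,C,D] 3)) = {2, 3} := by
        ext i; fin_cases i <;> simp only [Finset.mem_filter, Finset.mem_univ, true_and] <;> simp [hw4, hx3, hy2, hz1]
      exact (congrArg Finset.card this).trans (by decide)

/-- The key comparability lemma under unmixedness and no 3/4-cycles. -/
lemma comparability (hclut : IsClutter E) (hU : Unmixed E) (hvoid : ∅ ∉ E)
    (h3 : ¬ HasCycleOfLength E 3) (h4 : ¬ HasCycleOfLength E 4)
    {g : ℕ} (hg : g = coveringNumber E) (em : Fin g → Finset V)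
    (hE : ∀ i, em i ∈ E) (hd : ∀ i j, i ≠ j → Disjoint (em i) (em j)) :
    ∀ f₁ ∈ E, ∀ f₂ ∈ E, ∀ i, f₁ ∩ em i ⊆ f₂ ∩ em i ∨ f₂ ∩ em i ⊆ f₁ ∩ em i := by
  intro f₁ hf₁ f₂ hf₂ i
  by_contra hcon
  push_neg at hcon
  obtain ⟨hc1, hc2⟩ := hcon
  obtain ⟨a, ha, ha2⟩ := Finset.not_subset.1 hc1
  obtain ⟨b, hb, hb2⟩ := Finset.not_subset.1 hc2
  rw [Finset.mem_inter] at ha hb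
  obtain ⟨haf₁, hae⟩ := ha
  obtain ⟨hbf₂, hbe⟩ := hb
  have haf₂ : a ∉ f₂ := fun h => ha2 (Finset.mem_inter.2 ⟨h, hae⟩)
  have hbf₁ : b ∉ f₁ := fun h => hb2 (Finset.mem_inter.2 ⟨h, hbe⟩)
  have hab : a ≠ b := fun h => haf₂ (h ▸ hbf₂)
  set e := em i with he_def
  have hee : e ∈ E := hE i
  -- G is independent
  set G := (f₁ ∪ f₂ ∪ e) \ {a, b} with hG
  have haG : a ∉ G := by simp [hG]
  have hbG : b ∉ G := by simp [hG]
  have hind : IsIndependentSet E G := by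
    intro h hh hsub
    have hah : a ∉ h := fun hc => haG (hsub hc)
    have hbh : b ∉ h := fun hc => hbG (hsub hc)
    have hne1 : ¬ h ⊆ f₁ := fun hs => hah ((hclut h hh f₁ hf₁ hs) ▸ haf₁)
    have hne2 : ¬ h ⊆ f₂ := fun hs => hbh ((hclut h hh f₂ hf₂ hs) ▸ hbf₂)
    have hnee : ¬ h ⊆ e := fun hs => hah ((hclut h hh e hee hs) ▸ hae)
    obtain ⟨p, hp, hpe⟩ := Finset.not_subset.1 hnee
    obtain ⟨q, hq, hqf₁⟩ := Finset.not_subset.1 hne1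
    obtain ⟨r, hr, hrf₂⟩ := Finset.not_subset.1 hne2
    have hmem : ∀ x ∈ h, x ∈ f₁ ∨ x ∈ f₂ ∨ x ∈ e := by
      intro x hx
      have := hsub hx
      simp only [hG, Finset.mem_sdiff, Finset.mem_union] at this
      tauto
    have hpf : p ∈ f₁ ∨ p ∈ f₂ := by
      rcases hmem p hp with h1 | h2 | h3'
      · exact Or.inl h1
      · exact Or.inr h2
      · exact absurd h3' hpe
    by_cases hp1 : p ∈ f₁
    · by_cases hp2 : p ∈ f₂
      · -- 3-cycle: a ∈ f₁∩e∖f₂, b ∈ e∩f₂∖f₁, p ∈ f₂∩f₁∖e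
        exact h3 (mk_cycle3 hf₁ hee hf₂ haf₁ hae haf₂ hbe hbf₂ hbf₁ hp2 hp1 hpe)
      · -- p ∈ f₁ ∖ f₂, p ∉ e
        by_cases hqe : q ∈ e
        · -- 3-cycle: p ∈ f₁∩h∖e, q ∈ h∩e∖f₁, a ∈ e∩f₁∖h
          exact h3 (mk_cycle3 hf₁ hh hee hp1 hp hpe hq hqe hqf₁ hae haf₁ hah)
        · -- q ∈ f₂, q ∉ f₁, q ∉ e : 4-cycle p,q,b,a with edges f₁,h,f₂,e
          have hqf₂ : q ∈ f₂ := by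
            rcases hmem q hq with h1 | h2 | h3'
            · exact absurd h1 hqf₁
            · exact h2
            · exact absurd h3' hqe
          exact h4 (mk_cycle4 hf₁ hh hf₂ hee hp1 hp hp2 hpe hq hqf₂ hqe hqf₁
            hbf₂ hbe hbf₁ hbh hae haf₁ hah haf₂)
    · have hp2 : p ∈ f₂ := hpf.resolve_left hp1
      by_cases hre : r ∈ e
      · -- 3-cycle: p ∈ f₂∩h∖e, r ∈ h∩e∖f₂, b ∈ e∩f₂∖h
        exact h3 (mk_cycle3 hf₂ hh hee hp2 hp hpe hr hre hrf₂ hbe hbf₂ hbh)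
      · -- r ∈ f₁, r ∉ f₂, r ∉ e : 4-cycle p,r,a,b with edges f₂,h,f₁,e
        have hrf₁ : r ∈ f₁ := by
          rcases hmem r hr with h1 | h2 | h3'
          · exact h1
          · exact absurd h2 hrf₂
          · exact absurd h3' hre
        exact h4 (mk_cycle4 hf₂ hh hf₁ hee hp2 hp hp1 hpe hr hrf₁ hre hrf₂
          haf₁ hae haf₂ hah hbe hbf₂ hbh hbf₁)
  obtain ⟨F, hsubF, hF⟩ := exists_facet_superset hind
  have haF : a ∉ F := by
    intro haF
    refine hF.1 f₁ hf₁ ?_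
    intro x hx
    by_cases hxa : x = a
    · rwa [hxa]
    · refine hsubF ?_
      simp only [hG, Finset.mem_sdiff, Finset.mem_union, Finset.mem_insert, Finset.mem_singleton]
      refine ⟨Or.inl (Or.inl hx), ?_⟩
      push_neg
      exact ⟨hxa, fun hxb => hbf₁ (hxb ▸ hx)⟩
  have hbF : b ∉ F := by
    intro hbF
    refine hF.1 f₂ hf₂ ?_
    intro x hx
    by_cases hxb : x = b
    · rwa [hxb]
    · refine hsubF ?_
      simp only [hG, Finset.mem_sdiff, Finset.mem_union, Finset.mem_insert, Finset.mem_singleton]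
      refine ⟨Or.inl (Or.inr hx), ?_⟩
      push_neg
      exact ⟨fun hxa => haf₂ (hxa ▸ hx), hxb⟩
  obtain ⟨c, -, hc⟩ := unmixed_facet_diff_singleton hclut hU hvoid hg em hE hd F hF i
  have ha' : a ∈ em i \ F := Finset.mem_sdiff.2 ⟨hae, haF⟩
  have hb' : b ∈ em i \ F := Finset.mem_sdiff.2 ⟨hbe, hbF⟩
  rw [hc] at ha' hb'
  simp only [Finset.mem_singleton] at ha' hb'
  exact hab (ha'.trans hb'.symm)

/-- Each matching edge has a free vertex. -/
lemma free_vertex (hclut : IsClutter E) (hvoid : ∅ ∉ E)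
    {g : ℕ} (em : Fin g → Finset V) (hE : ∀ i, em i ∈ E)
    (hcomp : ∀ f₁ ∈ E, ∀ f₂ ∈ E, ∀ i, f₁ ∩ em i ⊆ f₂ ∩ em i ∨ f₂ ∩ em i ⊆ f₁ ∩ em i)
    (i : Fin g) : ∃ x ∈ em i, ∀ f ∈ E, x ∈ f → f = em i := by
  by_contra hcon
  push_neg at hcon
  -- every vertex of em i is in some other edge
  have hstep : ∀ x ∈ em i, ∃ f ∈ E, x ∈ f ∧ f ≠ em i := by
    intro x hx
    obtain ⟨f, hf, hxf, hfne⟩ := hcon x hx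
    exact ⟨f, hf, hxf, hfne⟩
  have hene : (em i).Nonempty := by
    rcases Finset.eq_empty_or_nonempty (em i) with h | h
    · exact absurd (h ▸ hE i) hvoid
    · exact h
  have key : ∀ s : Finset V, s ⊆ em i → ∃ f ∈ E, f ≠ em i ∧ s ⊆ f ∩ em i := by
    intro s
    induction s using Finset.induction with
    | empty =>
      intro _
      obtain ⟨x, hx⟩ := hene
      obtain ⟨f, hf, -, hfne⟩ := hstep x hx
      exact ⟨f, hf, hfne, Finset.empty_subset _⟩
    | @insert x s hxs ih =>
      intro hsub
      have hx : x ∈ em i := hsub (Finset.mem_insert_self x s)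
      have hs : s ⊆ em i := fun y hy => hsub (Finset.mem_insert_of_mem hy)
      obtain ⟨f, hf, hfne, hsf⟩ := ih hs
      obtain ⟨f', hf', hxf', hfne'⟩ := hstep x hx
      rcases hcomp f hf f' hf' i with hle | hle
      · exact ⟨f', hf', hfne', Finset.insert_subset
          (Finset.mem_inter.2 ⟨hxf', hx⟩) (hsf.trans hle)⟩
      · exact ⟨f, hf, hfne, Finset.insert_subset
          (hle (Finset.mem_inter.2 ⟨hxf', hx⟩)) hsf⟩
  obtain ⟨f, hf, hfne, hsub⟩ := key (em i) (subset_refl _)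
  have : em i ⊆ f := hsub.trans Finset.inter_subset_left
  exact hfne (hclut (em i) (hE i) f hf this).symm |>.elim

/-- In a minimal cover, every vertex is "needed": some edge meets the cover only there. -/
lemma mincover_witness (hC : IsMinimalVertexCover E C) :
    ∀ v ∈ C, ∃ f ∈ E, f ∩ C = {v} := by
  intro v hv
  have hsub : C.erase v ⊂ C := Finset.erase_ssubset hv
  have := hC.2 _ hsub
  rw [IsVertexCover] at this
  push_neg at this
  obtain ⟨f, hf, hfe⟩ := this
  refine ⟨f, hf, ?_⟩
  try rw [Finset.not_nonempty_iff_eq_empty] at hfe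
  have hfc := hC.1 f hf
  ext x
  simp only [Finset.mem_inter, Finset.mem_singleton]
  constructor
  · rintro ⟨hxf, hxC⟩
    by_contra hxv
    have : x ∈ f ∩ C.erase v := Finset.mem_inter.2 ⟨hxf, Finset.mem_erase.2 ⟨hxv, hxC⟩⟩
    simp [hfe] at this
  · rintro rfl
    obtain ⟨y, hy⟩ := hfc
    rw [Finset.mem_inter] at hy
    by_cases hyv : y = x
    · exact ⟨hyv ▸ hy.1, hv⟩
    · have : y ∈ f ∩ C.erase x := Finset.mem_inter.2 ⟨hy.1, Finset.mem_erase.2 ⟨hyv, hy.2⟩⟩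
      simp [hfe] at this

/-- Condition (b) data implies every minimal cover has cardinality `g`, hence unmixedness. -/
lemma mincover_card_of_b {g : ℕ} (em : Fin g → Finset V)
    (hE : ∀ i, em i ∈ E) (hd : ∀ i j, i ≠ j → Disjoint (em i) (em j))
    (hperf : ∀ x : V, ∃ i, x ∈ em i)
    (hcomp : ∀ f₁ ∈ E, ∀ f₂ ∈ E, ∀ i, f₁ ∩ em i ⊆ f₂ ∩ em i ∨ f₂ ∩ em i ⊆ f₁ ∩ em i)
    (hC : IsMinimalVertexCover E C) : C.card = g := by
  classical
  have hone : ∀ i, (C ∩ em i).card = 1 := by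
    intro i
    have hne : (C ∩ em i).Nonempty := by
      have := hC.1 (em i) (hE i)
      rwa [Finset.inter_comm] at this
    rw [Finset.card_eq_one]
    obtain ⟨x, hx⟩ := hne
    refine ⟨x, ?_⟩
    ext y
    simp only [Finset.mem_singleton]
    constructor
    · intro hy
      rw [Finset.mem_inter] at hx hy
      obtain ⟨fx, hfx, hfxi⟩ := mincover_witness hC x hx.1
      obtain ⟨fy, hfy, hfyi⟩ := mincover_witness hC y hy.1
      rcases hcomp fx hfx fy hfy i with hle | hle
      · have : x ∈ fy ∩ C := by
          have hx' : x ∈ fx ∩ em i := by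
            refine Finset.mem_inter.2 ⟨?_, hx.2⟩
            have : x ∈ fx ∩ C := by rw [hfxi]; simp
            exact (Finset.mem_inter.1 this).1
          exact Finset.mem_inter.2 ⟨(Finset.mem_inter.1 (hle hx')).1, hx.1⟩
        rw [hfyi] at this
        simp only [Finset.mem_singleton] at this
        exact this ▸ rfl
      · have : y ∈ fx ∩ C := by
          have hy' : y ∈ fy ∩ em i := by
            refine Finset.mem_inter.2 ⟨?_, hy.2⟩
            have : y ∈ fy ∩ C := by rw [hfyi]; simp
            exact (Finset.mem_inter.1 this).1
          exact Finset.mem_inter.2 ⟨(Finset.mem_inter.1 (hle hy')).1, hy.1⟩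
        rw [hfxi] at this
        simpa using this
    · rintro rfl; exact hx
  have hCuni : C = Finset.univ.biUnion (fun i : Fin g => C ∩ em i) := by
    ext x
    simp only [Finset.mem_biUnion, Finset.mem_univ, true_and, Finset.mem_inter]
    constructor
    · intro hx
      obtain ⟨i, hi⟩ := hperf x
      exact ⟨i, hx, hi⟩
    · rintro ⟨i, hx, -⟩; exact hx
  rw [hCuni, Finset.card_biUnion]
  · simp [hone]
  · intro i _ j _ hij
    exact Finset.disjoint_of_subset_left Finset.inter_subset_right
      (Finset.disjoint_of_subset_right Finset.inter_subset_right (hd i j hij))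

lemma unmixed_of_b {g : ℕ} (em : Fin g → Finset V)
    (hE : ∀ i, em i ∈ E) (hd : ∀ i j, i ≠ j → Disjoint (em i) (em j))
    (hperf : ∀ x : V, ∃ i, x ∈ em i)
    (hcomp : ∀ f₁ ∈ E, ∀ f₂ ∈ E, ∀ i, f₁ ∩ em i ⊆ f₂ ∩ em i ∨ f₂ ∩ em i ⊆ f₁ ∩ em i) :
    Unmixed E := by
  intro C D hC hD
  rw [mincover_card_of_b em hE hd hperf hcomp hC,
    mincover_card_of_b em hE hd hperf hcomp hD]



lemma pure_of_unmixed (hU : Unmixed E) : PureFamily (cFacets E) := by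
  intro F hF G hG
  have h1 := facet_iff_compl_mincover.1 hF
  have h2 := facet_iff_compl_mincover.1 hG
  have := hU _ _ h1 h2
  have hF' : Fᶜ.card = Fintype.card V - F.card := Finset.card_compl F
  have hG' : Gᶜ.card = Fintype.card V - G.card := Finset.card_compl G
  have hFle : F.card ≤ Fintype.card V := Finset.card_le_univ F
  have hGle : G.card ≤ Fintype.card V := Finset.card_le_univ G
  omega

lemma unmixed_of_pure (hP : PureFamily (cFacets E)) : Unmixed E := by
  intro C D hC hD
  have h1 : Cᶜ ∈ cFacets E := mincover_compl_facet hC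
  have h2 : Dᶜ ∈ cFacets E := mincover_compl_facet hD
  have := hP _ h1 _ h2
  have hC' : Cᶜ.card = Fintype.card V - C.card := Finset.card_compl C
  have hD' : Dᶜ.card = Fintype.card V - D.card := Finset.card_compl D
  have hCle : C.card ≤ Fintype.card V := Finset.card_le_univ C
  have hDle : D.card ≤ Fintype.card V := Finset.card_le_univ D
  omega

/-! ### Shelling machinery -/

/-- Domination preorder relative to an edge `e`. -/
def domi (E : Set (Finset V)) (e : Finset V) (x y : V) : Prop :=
  ∀ f ∈ E, f ≠ e → x ∈ f → y ∈ f

lemma domi_refl {e : Finset V} (x : V) : domi E e x x := fun _ _ _ h => h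

lemma domi_trans {e : Finset V} {x y z : V} (h1 : domi E e x y) (h2 : domi E e y z) :
    domi E e x z := fun f hf hne hx => h2 f hf hne (h1 f hf hne hx)

open Classical in
/-- Rank function on vertices of an edge. -/
noncomputable def kap (E : Set (Finset V)) (e : Finset V) (nn : ℕ) (enum : V → ℕ) (x : V) : ℕ :=
  (e.filter (fun z => domi E e z x)).card * (nn + 1) + enum x

lemma kap_lt_of_not_domi {e : Finset V} {nn : ℕ} {enum : V → ℕ} {x y : V}
    (htot : ∀ x ∈ e, ∀ y ∈ e, domi E e x y ∨ domi E e y x)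
    (hx : x ∈ e) (hy : y ∈ e) (henum : ∀ z, enum z < nn + 1)
    (h : ¬ domi E e x y) : kap E e nn enum y < kap E e nn enum x := by
  classical
  have hyx : domi E e y x := (htot x hx y hy).resolve_left h
  have hsub : (e.filter (fun z => domi E e z y)) ⊂ (e.filter (fun z => domi E e z x)) := by
    constructor
    · intro z hz
      rw [Finset.mem_filter] at hz ⊢
      exact ⟨hz.1, domi_trans hz.2 hyx⟩
    · intro hsub'
      have : x ∈ e.filter (fun z => domi E e z y) :=
        hsub' (Finset.mem_filter.2 ⟨hx, domi_refl x⟩)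
      rw [Finset.mem_filter] at this
      exact h this.2
  have hcard := Finset.card_lt_card hsub
  unfold kap
  have h1 : ((e.filter (fun z => domi E e z y)).card + 1) * (nn + 1) ≤
      (e.filter (fun z => domi E e z x)).card * (nn + 1) := Nat.mul_le_mul_right _ hcard
  rw [add_one_mul] at h1
  have h2 := henum y
  have h3 : 0 ≤ enum x := Nat.zero_le _
  omega

lemma domi_of_kap_lt {e : Finset V} {nn : ℕ} {enum : V → ℕ} {x y : V}
    (htot : ∀ x ∈ e, ∀ y ∈ e, domi E e x y ∨ domi E e y x)
    (hx : x ∈ e) (hy : y ∈ e) (henum : ∀ z, enum z < nn + 1)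
    (h : kap E e nn enum x < kap E e nn enum y) : domi E e x y := by
  by_contra hnd
  exact absurd h (not_lt.2 (le_of_lt (kap_lt_of_not_domi htot hx hy henum hnd)))

lemma kap_injective {e : Finset V} {nn : ℕ} {enum : V → ℕ}
    (hinj : Function.Injective enum) (henum : ∀ z, enum z < nn + 1) :
    Function.Injective (kap E e nn enum) := by
  classical
  intro x y h
  apply hinj
  have hx : kap E e nn enum x % (nn + 1) = enum x := by
    unfold kap; rw [add_comm, Nat.add_mul_mod_self_right]; exact Nat.mod_eq_of_lt (henum x)
  have hy : kap E e nn enum y % (nn + 1) = enum y := by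
    unfold kap; rw [add_comm, Nat.add_mul_mod_self_right]; exact Nat.mod_eq_of_lt (henum y)
  rw [← hx, ← hy, h]



lemma shellable_of_b (hclut : IsClutter E) (hvoid : ∅ ∉ E)
    {g : ℕ} (em : Fin g → Finset V)
    (hE : ∀ i, em i ∈ E) (hd : ∀ i j, i ≠ j → Disjoint (em i) (em j))
    (hperf : ∀ x : V, ∃ i, x ∈ em i)
    (hcomp : ∀ f₁ ∈ E, ∀ f₂ ∈ E, ∀ i, f₁ ∩ em i ⊆ f₂ ∩ em i ∨ f₂ ∩ em i ⊆ f₁ ∩ em i)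
    (hsing : ∀ F : Finset V, IsFacet E F → ∀ i, ∃ c ∈ em i, em i \ F = {c}) :
    Shellable (cFacets E) := by
  classical
  -- unique membership index
  have huniq : ∀ x (i j : Fin g), x ∈ em i → x ∈ em j → i = j := by
    intro x i j hi hj
    by_contra hij
    exact Finset.disjoint_left.1 (hd i j hij) hi hj
  -- choose missing vertices of facets
  have hsing' : ∀ F : Finset V, IsFacet E F → ∀ i, ∃ c, c ∈ em i ∧ em i \ F = {c} := by
    intro F hF i
    obtain ⟨c, hc1, hc2⟩ := hsing F hF i
    exact ⟨c, hc1, hc2⟩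
  choose mv hmv1 hmv2 using hsing'
  -- membership characterization for facets
  have hmvF : ∀ (F : Finset V) (hF : IsFacet E F) (i : Fin g) (x : V), x ∈ em i →
      (x ∉ F ↔ x = mv F hF i) := by
    intro F hF i x hx
    constructor
    · intro hxF
      have : x ∈ em i \ F := Finset.mem_sdiff.2 ⟨hx, hxF⟩
      rw [hmv2 F hF i] at this
      simpa using this
    · rintro rfl
      have : mv F hF i ∈ em i \ F := by rw [hmv2 F hF i]; simp
      exact (Finset.mem_sdiff.1 this).2
  have hfacet_ext : ∀ (F F' : Finset V) (hF : IsFacet E F) (hF' : IsFacet E F'),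
      (∀ i, mv F hF i = mv F' hF' i) → F = F' := by
    intro F F' hF hF' h
    ext x
    obtain ⟨i, hi⟩ := hperf x
    have h1 := hmvF F hF i x hi
    have h2 := hmvF F' hF' i x hi
    rw [h i] at h1
    by_cases hx : x ∈ F'
    · constructor
      · intro _; exact hx
      · intro _
        by_contra hxF
        exact (h2.2 (h1.1 hxF)) hx
    · constructor
      · intro hxF
        exact absurd (h2.1 hx) (by intro hh; exact (h1.2 hh) hxF)
      · intro hh; exact absurd hh hx
  -- rank data
  set nn := Fintype.card V with hnn
  set enum : V → ℕ := fun x => ((Fintype.equivFin V) x : ℕ) with henum_def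
  have henum : ∀ z, enum z < nn + 1 := by
    intro z
    have := ((Fintype.equivFin V) z).2
    simp only [henum_def]
    omega
  have henum_inj : Function.Injective enum := by
    intro a b h
    have : (Fintype.equivFin V) a = (Fintype.equivFin V) b := Fin.ext h
    exact (Fintype.equivFin V).injective this
  have htot : ∀ i : Fin g, ∀ x ∈ em i, ∀ y ∈ em i, domi E (em i) x y ∨ domi E (em i) y x := by
    intro i x hx y hy
    by_contra hcon
    push_neg at hcon
    obtain ⟨h1, h2⟩ := hcon
    rw [domi] at h1 h2
    push_neg at h1 h2
    obtain ⟨f₁, hf₁, hf₁ne, hxf₁, hyf₁⟩ := h1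
    obtain ⟨f₂, hf₂, hf₂ne, hyf₂, hxf₂⟩ := h2
    rcases hcomp f₁ hf₁ f₂ hf₂ i with hle | hle
    · exact hxf₂ (Finset.mem_inter.1 (hle (Finset.mem_inter.2 ⟨hxf₁, hx⟩))).1
    · exact hyf₁ (Finset.mem_inter.1 (hle (Finset.mem_inter.2 ⟨hyf₂, hy⟩))).1
  -- key vectors
  set key : Finset V → Fin g → ℕ := fun F i => ∑ x ∈ em i \ F, kap E (em i) nn enum x
    with hkey_def
  have hkeyF : ∀ (F : Finset V) (hF : IsFacet E F) (i : Fin g),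
      key F i = kap E (em i) nn enum (mv F hF i) := by
    intro F hF i
    simp only [hkey_def]
    rw [hmv2 F hF i, Finset.sum_singleton]
  -- linear order machinery
  letI lexO : LinearOrder (Lex (∀ _ : Fin g, ℕ)) :=
    @Pi.Lex.linearOrder (Fin g) (fun _ => ℕ) inferInstance
      (inferInstance : WellFoundedLT (Fin g)) (fun _ => inferInstance)
  set tb : Finset V → ℕ := fun F => ((Fintype.equivFin (Finset V)) F : ℕ) with htb_def
  have htb_inj : Function.Injective tb := by
    intro a b h
    exact (Fintype.equivFin (Finset V)).injective (Fin.ext h)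
  set K : Finset V → Lex ((Lex (∀ _ : Fin g, ℕ)) × ℕ) :=
    fun F => toLex (toLex (key F), tb F) with hK_def
  have hK_inj : Function.Injective K := by
    intro a b h
    simp only [hK_def] at h
    have h2 := congrArg ofLex h
    have h3 : tb a = tb b := congrArg Prod.snd h2
    exact htb_inj h3
  set rel : Finset V → Finset V → Prop := fun F G => K G ≤ K F with hrel_def
  haveI hrel_dec : DecidableRel rel := fun _ _ => Classical.propDecidable _
  haveI : IsTrans (Finset V) rel := ⟨fun _ _ _ h1 h2 => le_trans h2 h1⟩
  haveI : IsAntisymm (Finset V) rel := ⟨fun a b h1 h2 => hK_inj (le_antisymm h2 h1)⟩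
  haveI : IsTotal (Finset V) rel := ⟨fun a b => (le_total (K b) (K a)).imp id id⟩
  set S : Finset (Finset V) := Finset.univ.filter (fun F => IsFacet E F) with hS_def
  set L : List (Finset V) := S.sort rel with hL_def
  have hLnodup : L.Nodup := Finset.sort_nodup S rel
  have hLsorted : List.Pairwise rel L := Finset.pairwise_sort S rel
  have hLmem : ∀ G : Finset V, G ∈ L ↔ IsFacet E G := by
    intro G
    rw [hL_def, Finset.mem_sort, hS_def, Finset.mem_filter]
    simp
  refine ⟨L.length, L.get, ?_, ?_, ?_⟩
  · exact List.nodup_iff_injective_get.1 hLnodup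
  · intro G
    constructor
    · intro hG
      obtain ⟨i, hi⟩ := List.mem_iff_get.1 ((hLmem G).2 hG)
      exact ⟨i, hi⟩
    · rintro ⟨i, rfl⟩
      exact (hLmem _).1 (L.get_mem _)
  · intro i j hij
    set Fd := L.get i with hFd_def
    set Fc := L.get j with hFc_def
    have hFdF : IsFacet E Fd := (hLmem _).1 (L.get_mem _)
    have hFcF : IsFacet E Fc := (hLmem _).1 (L.get_mem _)
    have hne : Fd ≠ Fc := by
      intro h
      exact absurd (List.nodup_iff_injective_get.1 hLnodup h) (Fin.ne_of_lt hij)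
    have hrel' : rel Fd Fc := List.Pairwise.rel_get_of_lt hLsorted hij
    have hKlt : K Fc < K Fd := lt_of_le_of_ne hrel' (fun h => hne (hK_inj h).symm)
    -- extract lex difference on key vectors
    have hkey_ne : key Fc ≠ key Fd := by
      intro h
      apply hne
      refine (hfacet_ext Fc Fd hFcF hFdF ?_).symm
      intro i'
      have h1 := hkeyF Fc hFcF i'
      have h2 := hkeyF Fd hFdF i'
      apply kap_injective henum_inj henum
      rw [← h1, ← h2, h]
    have hlex : toLex (key Fc) < toLex (key Fd) := by
      simp only [hK_def] at hKlt
      rcases Prod.Lex.toLex_lt_toLex.1 hKlt with h | ⟨h, -⟩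
      · exact h
      · exact absurd (congrArg ofLex h) hkey_ne
    obtain ⟨i₀, hfirst, hlt₀⟩ := hlex
    -- the two distinguished vertices in em i₀
    set cc := mv Fc hFcF i₀ with hcc_def
    set dd := mv Fd hFdF i₀ with hdd_def
    have hcc_mem : cc ∈ em i₀ := hmv1 Fc hFcF i₀
    have hdd_mem : dd ∈ em i₀ := hmv1 Fd hFdF i₀
    have hkap_lt : kap E (em i₀) nn enum cc < kap E (em i₀) nn enum dd := by
      have h1 := hkeyF Fc hFcF i₀
      have h2 := hkeyF Fd hFdF i₀
      have hlt₀' : key Fc i₀ < key Fd i₀ := hlt₀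
      rw [h1, h2] at hlt₀'
      exact hlt₀'
    have hccdd : cc ≠ dd := by
      intro h; rw [h] at hkap_lt; exact lt_irrefl _ hkap_lt
    have hdom : domi E (em i₀) cc dd :=
      domi_of_kap_lt (htot i₀) hcc_mem hdd_mem henum hkap_lt
    -- dd belongs to Fc
    have hddFc : dd ∈ Fc := by
      by_contra hddFc
      exact hccdd ((hmvF Fc hFcF i₀ dd hdd_mem).1 hddFc).symm
    have hddFd : dd ∉ Fd := (hmvF Fd hFdF i₀ dd hdd_mem).2 rfl
    have hccFc : cc ∉ Fc := (hmvF Fc hFcF i₀ cc hcc_mem).2 rfl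
    -- the new facet D'
    set D' : Finset V := (Fc ∪ {cc}) \ {dd} with hD'_def
    have hD'mem : ∀ x, x ∈ D' ↔ (x ∈ Fc ∨ x = cc) ∧ x ≠ dd := by
      intro x
      simp [hD'_def, Finset.mem_sdiff, Finset.mem_union, or_comm]
    -- D'ᶜ is a cover
    have hcov : IsVertexCover E D'ᶜ := by
      intro f hf
      obtain ⟨x, hx⟩ := (facet_iff_compl_mincover.1 hFcF).1 f hf
      rw [Finset.mem_inter, Finset.mem_compl] at hx
      obtain ⟨hxf, hxFc⟩ := hx
      obtain ⟨i', hi'⟩ := hperf x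
      have hx_eq : x = mv Fc hFcF i' := (hmvF Fc hFcF i' x hi').1 hxFc
      by_cases hii : i' = i₀
      · -- x = cc; use dd instead
        subst hii
        rw [← hcc_def] at hx_eq
        subst hx_eq
        by_cases hfe : f = em i'
        · refine ⟨dd, Finset.mem_inter.2 ⟨hfe ▸ hdd_mem, Finset.mem_compl.2 ?_⟩⟩
          rw [hD'mem]
          push_neg
          intro _
          rfl
        · refine ⟨dd, Finset.mem_inter.2 ⟨hdom f hf hfe hxf, Finset.mem_compl.2 ?_⟩⟩
          rw [hD'mem]
          push_neg
          intro _
          rfl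
      · refine ⟨x, Finset.mem_inter.2 ⟨hxf, Finset.mem_compl.2 ?_⟩⟩
        rw [hD'mem]
        push_neg
        intro hor
        rcases hor with hFc' | hcc'
        · exact absurd hFc' hxFc
        · exact absurd (huniq x i' i₀ hi' (by rw [hcc']; exact hcc_mem)) hii
    -- D'ᶜ has cardinality at most g, hence is a minimal cover
    have hFc_card : Fcᶜ.card = g :=
      mincover_card_of_b em hE hd hperf hcomp (facet_iff_compl_mincover.1 hFcF)
    have hccFcc : cc ∈ Fcᶜ := Finset.mem_compl.2 hccFc
    have hD'c_eq : D'ᶜ = (Fcᶜ \ {cc}) ∪ {dd} := by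
      ext x
      rw [Finset.mem_compl, hD'mem x, Finset.mem_union, Finset.mem_sdiff, Finset.mem_compl,
        Finset.mem_singleton, Finset.mem_singleton]
      constructor
      · intro h
        by_cases h3 : x = dd
        · exact Or.inr h3
        · by_cases h1 : x ∈ Fc
          · exact absurd ⟨Or.inl h1, h3⟩ h
          · by_cases h2 : x = cc
            · exact absurd ⟨Or.inr h2, h3⟩ h
            · exact Or.inl ⟨h1, h2⟩
      · rintro (⟨h1, h2⟩ | h3)
        · rintro ⟨h4 | h5, -⟩
          · exact h1 h4
          · exact h2 h5
        · intro hmem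
          exact hmem.2 h3
    have hD'c_card : D'ᶜ.card ≤ g := by
      rw [hD'c_eq]
      have h1 : (Fcᶜ \ {cc}).card = g - 1 := by
        rw [Finset.card_sdiff_of_subset (Finset.singleton_subset_iff.2 hccFcc), hFc_card,
          Finset.card_singleton]
      have h2 : ((Fcᶜ \ {cc}) ∪ {dd}).card ≤ (Fcᶜ \ {cc}).card + 1 := by
        have := Finset.card_union_le (Fcᶜ \ {cc}) ({dd} : Finset V)
        simpa using this
      have hg1 : 1 ≤ g := by
        by_contra hg
        have : g = 0 := by omega
        rw [this] at hFc_card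
        rw [Finset.card_eq_zero] at hFc_card
        exact absurd (hFc_card ▸ hccFcc) (Finset.notMem_empty cc)
      omega
    have hD'min : IsMinimalVertexCover E D'ᶜ := by
      obtain ⟨D'', hD''sub, hD''min⟩ := exists_mincover_subset hcov
      have hD''card : D''.card = g := mincover_card_of_b em hE hd hperf hcomp hD''min
      have : D'' = D'ᶜ := Finset.eq_of_subset_of_card_le hD''sub (by omega)
      rwa [← this]
    have hD'F : IsFacet E D' := by
      have := mincover_compl_facet hD'min
      rwa [compl_compl] at this
    -- keys of D'
    have hD'diff : ∀ i' : Fin g, i' ≠ i₀ → em i' \ D' = em i' \ Fc := by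
      intro i' hii
      ext x
      simp only [Finset.mem_sdiff, hD'mem]
      constructor
      · rintro ⟨hx, hnd⟩
        refine ⟨hx, fun hxFc => hnd ⟨Or.inl hxFc, fun hxd => ?_⟩⟩
        exact hii (huniq x i' i₀ hx (by rw [hxd]; exact hdd_mem))
      · rintro ⟨hx, hxFc⟩
        refine ⟨hx, fun hmem => ?_⟩
        rcases hmem.1 with h | h
        · exact hxFc h
        · exact hii (huniq x i' i₀ hx (by rw [h]; exact hcc_mem))
    have hD'diff₀ : em i₀ \ D' = {dd} := by
      ext x
      simp only [Finset.mem_sdiff, hD'mem, Finset.mem_singleton]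
      constructor
      · rintro ⟨hx, hnd⟩
        by_contra hxd
        apply hnd
        refine ⟨?_, hxd⟩
        by_cases hxFc : x ∈ Fc
        · exact Or.inl hxFc
        · exact Or.inr ((hmvF Fc hFcF i₀ x hx).1 hxFc)
      · rintro rfl
        exact ⟨hdd_mem, fun hmem => hmem.2 rfl⟩
    have hkeyD' : ∀ i' : Fin g, i' ≠ i₀ → key D' i' = key Fc i' := by
      intro i' hii
      simp only [hkey_def]
      rw [hD'diff i' hii]
    have hkeyD'₀ : key D' i₀ = kap E (em i₀) nn enum dd := by
      simp only [hkey_def]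
      rw [hD'diff₀, Finset.sum_singleton]
    -- D' is lex-larger than Fc
    have hlex2 : toLex (key Fc) < toLex (key D') := by
      have hpl : Pi.Lex (· < ·) (@fun _ => (· < ·)) (key Fc) (key D') := by
        refine ⟨i₀, fun j' hj' => ?_, ?_⟩
        · exact (hkeyD' j' (Fin.ne_of_lt hj')).symm
        · rw [hkeyD'₀, hkeyF Fc hFcF i₀]
          exact hkap_lt
      exact hpl
    have hKlt2 : K Fc < K D' := by
      simp only [hK_def]
      exact Prod.Lex.toLex_lt_toLex.2 (Or.inl hlex2)
    -- D' appears earlier in the list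
    obtain ⟨l, hl⟩ := List.mem_iff_get.1 ((hLmem D').2 hD'F)
    have hlj : l < j := by
      by_contra hlj
      push_neg at hlj
      rcases lt_or_eq_of_le hlj with h | h
      · have := List.Pairwise.rel_get_of_lt hLsorted h
        rw [hl] at this
        exact absurd this (not_le.2 hKlt2)
      · rw [← h] at hl
        rw [← hFc_def] at hl
        exact absurd (congrArg K hl) (ne_of_lt hKlt2)
    refine ⟨dd, Finset.mem_sdiff.2 ⟨hddFc, hddFd⟩, l, hlj, ?_⟩
    rw [hl]
    ext x
    simp only [Finset.mem_sdiff, hD'mem, Finset.mem_singleton]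
    constructor
    · rintro ⟨hxFc, hnd⟩
      by_contra hxd
      exact hnd ⟨Or.inl hxFc, hxd⟩
    · rintro rfl
      exact ⟨hddFc, fun hmem => hmem.2 rfl⟩

end AuxLemmas

/-- For a clutter with the König property, without isolated vertices and
without cycles of length 3 or 4, unmixedness is equivalent to the existence of a perfect
matching of König type whose edges have free vertices and satisfy the ordering condition,
and also equivalent to pure shellability of the independence complex. -/
theorem unmixed_tfae_no_small_cycles
    (E : Set (Finset V)) (hclut : IsClutter E)
    (hkonig : HasKonigProperty E) (hnoiso : ∀ x : V, ∃ e ∈ E, x ∈ e)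
    (h3 : ¬ HasCycleOfLength E 3) (h4 : ¬ HasCycleOfLength E 4) :
    (Unmixed E ↔
      ∃ em : Fin (coveringNumber E) → Finset V,
        (∀ i, em i ∈ E) ∧ (∀ i j, i ≠ j → Disjoint (em i) (em j)) ∧
        (∀ x : V, ∃ i, x ∈ em i) ∧
        (∀ i, ∃ x ∈ em i, ∀ f ∈ E, x ∈ f → f = em i) ∧
        (∀ f₁ ∈ E, ∀ f₂ ∈ E, ∀ i,
          f₁ ∩ em i ⊆ f₂ ∩ em i ∨ f₂ ∩ em i ⊆ f₁ ∩ em i)) ∧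
    (Unmixed E ↔ PureShellable (cFacets E)) := by
  classical
  have hvoid : ∅ ∉ E := empty_not_mem hclut hkonig
  have hab : Unmixed E ↔
      (∃ em : Fin (coveringNumber E) → Finset V,
        (∀ i, em i ∈ E) ∧ (∀ i j, i ≠ j → Disjoint (em i) (em j)) ∧
        (∀ x : V, ∃ i, x ∈ em i) ∧
        (∀ i, ∃ x ∈ em i, ∀ f ∈ E, x ∈ f → f = em i) ∧
        (∀ f₁ ∈ E, ∀ f₂ ∈ E, ∀ i,
          f₁ ∩ em i ⊆ f₂ ∩ em i ∨ f₂ ∩ em i ⊆ f₁ ∩ em i)) := by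
    constructor
    · intro hU
      obtain ⟨em, hE, hd⟩ := exists_matching_fun hkonig hvoid
      have hperf := unmixed_perfect hclut hU hvoid hnoiso rfl em hE hd
      have hcomp := comparability hclut hU hvoid h3 h4 rfl em hE hd
      exact ⟨em, hE, hd, hperf, fun i => free_vertex hclut hvoid em hE hcomp i, hcomp⟩
    · rintro ⟨em, hE, hd, hperf, -, hcomp⟩
      exact unmixed_of_b em hE hd hperf hcomp
  refine ⟨hab, ?_, ?_⟩
  · intro hU
    refine ⟨pure_of_unmixed hU, ?_⟩
    obtain ⟨em, hE, hd, hperf, -, hcomp⟩ := hab.1 hU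
    have hsing := unmixed_facet_diff_singleton hclut hU hvoid rfl em hE hd
    exact shellable_of_b hclut hvoid em hE hd hperf hcomp hsing
  · intro hPS
    exact unmixed_of_pure hPS.1
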